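/- A Toeplitz operator T_φ on H²(𝔻) with symbol φ ∈ L^∞(𝕋) is invertible if and only if T_φ is Fredholm and ind(T_φ) = 0. -/

import Mathlib

open MeasureTheory Complex Filter Topology AddCircle

noncomputable section

instance : Fact (0 < 2 * Real.pi) := ⟨by positivity⟩

/-- The circle, as `ℝ / 2πℤ`. -/
abbrev 𝕋c := AddCircle (2 * Real.pi)

abbrev L2C := Lp ℂ 2 (@haarAddCircle (2 * Real.pi) _)

/-- The Hardy space `H²(𝔻)`, identified with the subspace of `L²(𝕋)` of functions whose
negative Fourier coefficients vanish. -/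
def H2D : Submodule ℂ L2C where
  carrier := {f | ∀ n : ℤ, n < 0 → fourierBasis.repr f n = 0}
  add_mem' := by
    intro f g hf hg n hn
    rw [map_add]
    simp [lp.coeFn_add, hf n hn, hg n hn]
  zero_mem' := by intro n hn; rw [map_zero]; simp
  smul_mem' := by
    intro c f hf n hn
    rw [LinearIsometryEquiv.map_smul]
    simp [hf n hn]

/-- `T` is the Toeplitz operator on `H²(𝔻)` with symbol `a ∈ L^∞(𝕋)`, characterized by its
matrix elements `⟪T f, g⟫ = ⟪a·f, g⟫` for `f, g ∈ H²(𝔻)`. -/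
def IsToeplitzD (a : 𝕋c → ℂ) (T : H2D →L[ℂ] H2D) : Prop :=
  ∀ f g : H2D, (inner ℂ ((T f : L2C)) (g : L2C) : ℂ) =
    ∫ θ : 𝕋c, (starRingEnd ℂ) (a θ * ((f : L2C) : 𝕋c → ℂ) θ) * ((g : L2C) : 𝕋c → ℂ) θ
      ∂haarAddCircle

/-- Membership in (the boundary-value class of) `H^∞(𝔻)`: essentially bounded with vanishing
negative Fourier coefficients. -/
def MemHInfD (h : 𝕋c → ℂ) : Prop :=
  MemLp h ⊤ haarAddCircle ∧ ∀ n : ℤ, n < 0 → fourierCoeff h n = 0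

/-- Membership in the Sarason algebra `H^∞ + C` on the circle. -/
def MemHInfC (u : 𝕋c → ℂ) : Prop :=
  ∃ h c : 𝕋c → ℂ, MemHInfD h ∧ Continuous c ∧ u =ᵐ[haarAddCircle] h + c

/-- Membership in `QC = (H^∞+C) ∩ conj(H^∞+C)`. -/
def MemQC (u : 𝕋c → ℂ) : Prop :=
  MemHInfC u ∧ MemHInfC (fun θ => (starRingEnd ℂ) (u θ))

/-- The inverse Cayley transform `𝔠⁻¹(w) = i(1+w)/(1-w)`, as a map `𝕋 → ℝ`. -/
def cayleyInvC (θ : 𝕋c) : ℝ :=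
  (Complex.I * (1 + (toCircle θ : ℂ)) / (1 - (toCircle θ : ℂ))).re

/-- Membership in `QC(ℝ)`: the pullback of `QC` under the Cayley transform. -/
def MemQCR (φ : ℝ → ℂ) : Prop := MemQC (fun θ => φ (cayleyInvC θ))

/-- The Cayley transform `𝔠(x) = (x-i)/(x+i)` from `ℝ` to the circle `ℝ/2πℤ`. -/
def cayleyR (x : ℝ) : 𝕋c := (((x - Complex.I) / (x + Complex.I)).arg : ℝ)



variable {E F : Type*} [NormedAddCommGroup E] [NormedSpace ℂ E]
  [NormedAddCommGroup F] [NormedSpace ℂ F]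

/-- The essential spectrum of a bounded operator: the spectrum of its coset in the
Calkin algebra, i.e. `z` such that `T - z` is not invertible modulo compact operators. -/
def essSpectrum (T : E →L[ℂ] E) : Set ℂ :=
  {z | ¬ ∃ S : E →L[ℂ] E,
    IsCompactOperator ⇑(S ∘L (T - z • ContinuousLinearMap.id ℂ E) - ContinuousLinearMap.id ℂ E) ∧
    IsCompactOperator ⇑((T - z • ContinuousLinearMap.id ℂ E) ∘L S - ContinuousLinearMap.id ℂ E)}

/-- A bounded operator is Fredholm if it has closed range and finite-dimensional kernel
and cokernel. -/
def IsFredholm (T : E →L[ℂ] F) : Prop :=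
  FiniteDimensional ℂ (LinearMap.ker (T : E →ₗ[ℂ] F)) ∧ FiniteDimensional ℂ (F ⧸ LinearMap.range (T : E →ₗ[ℂ] F)) ∧
    IsClosed (Set.range T)

/-- The Fredholm index `dim ker T - dim coker T`. -/
def fredholmIndex (T : E →L[ℂ] F) : ℤ :=
  (Module.finrank ℂ (LinearMap.ker (T : E →ₗ[ℂ] F)) : ℤ) - (Module.finrank ℂ (F ⧸ LinearMap.range (T : E →ₗ[ℂ] F)) : ℤ)


set_option synthInstance.maxHeartbeats 1000000
set_option maxHeartbeats 1000000

namespace ToeplitzAux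

local notation "μc" => (@haarAddCircle (2 * Real.pi) _)

lemma norm_fourier_apply (n : ℤ) (θ : 𝕋c) : ‖fourier n θ‖ = 1 := by
  simp [Circle.norm_coe]

lemma memLp_mul {c : 𝕋c → ℂ} (hc : Measurable c) (hb : ∀ θ, ‖c θ‖ ≤ 1) (f : L2C) :
    MemLp (fun θ => c θ * (f : 𝕋c → ℂ) θ) 2 μc :=
  MemLp.of_le_mul (Lp.memLp f)
    (hc.aestronglyMeasurable.mul (Lp.aestronglyMeasurable f))
    (Filter.Eventually.of_forall fun θ => by
      rw [norm_mul]
      exact mul_le_mul_of_nonneg_right (hb θ) (norm_nonneg _))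

/-- Multiplication by a bounded measurable function, as a continuous linear map on `L²`. -/
def mulCLM {c : 𝕋c → ℂ} (hc : Measurable c) (hb : ∀ θ, ‖c θ‖ ≤ 1) : L2C →L[ℂ] L2C :=
  LinearMap.mkContinuous
    { toFun := fun f => (memLp_mul hc hb f).toLp _
      map_add' := by
        intro f g
        refine Lp.ext ?_
        filter_upwards [MemLp.coeFn_toLp (memLp_mul hc hb (f + g)),
          MemLp.coeFn_toLp (memLp_mul hc hb f), MemLp.coeFn_toLp (memLp_mul hc hb g),
          Lp.coeFn_add f g,
          Lp.coeFn_add ((memLp_mul hc hb f).toLp _) ((memLp_mul hc hb g).toLp _)]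
          with θ h1 h2 h3 h4 h5
        simp only [h1, h5, Pi.add_apply, h2, h3, h4, mul_add]
      map_smul' := by
        intro a f
        refine Lp.ext ?_
        filter_upwards [MemLp.coeFn_toLp (memLp_mul hc hb (a • f)),
          MemLp.coeFn_toLp (memLp_mul hc hb f),
          Lp.coeFn_smul a f,
          Lp.coeFn_smul a ((memLp_mul hc hb f).toLp _)] with θ h1 h2 h3 h4
        simp only [h1, h4, Pi.smul_apply, h2, h3, RingHom.id_apply, smul_eq_mul]
        ring }
    1 (by
      intro f
      simp only [LinearMap.coe_mk, AddHom.coe_mk, one_mul]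
      rw [Lp.norm_toLp _ (memLp_mul hc hb f), Lp.norm_def]
      refine ENNReal.toReal_mono (Lp.eLpNorm_ne_top f) ?_
      refine eLpNorm_mono fun θ => ?_
      rw [norm_mul]
      calc ‖c θ‖ * ‖(f : 𝕋c → ℂ) θ‖ ≤ 1 * ‖(f : 𝕋c → ℂ) θ‖ :=
        mul_le_mul_of_nonneg_right (hb θ) (norm_nonneg _)
      _ = ‖(f : 𝕋c → ℂ) θ‖ := one_mul _)

lemma mulCLM_coeFn {c : 𝕋c → ℂ} (hc : Measurable c) (hb : ∀ θ, ‖c θ‖ ≤ 1) (f : L2C) :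
    (mulCLM hc hb f : 𝕋c → ℂ) =ᵐ[μc] fun θ => c θ * (f : 𝕋c → ℂ) θ :=
  MemLp.coeFn_toLp (memLp_mul hc hb f)

def mulF (m : ℤ) : L2C →L[ℂ] L2C :=
  mulCLM (map_continuous (fourier m)).measurable (fun θ => le_of_eq (norm_fourier_apply m θ))

lemma mulF_coeFn (m : ℤ) (f : L2C) :
    (mulF m f : 𝕋c → ℂ) =ᵐ[μc] fun θ => fourier m θ * (f : 𝕋c → ℂ) θ :=
  mulCLM_coeFn _ _ f

lemma norm_mulF (m : ℤ) (f : L2C) : ‖mulF m f‖ = ‖f‖ := by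
  rw [Lp.norm_def, Lp.norm_def]
  congr 1
  rw [eLpNorm_congr_ae (mulF_coeFn m f)]
  refine eLpNorm_congr_norm_ae (Filter.Eventually.of_forall fun θ => ?_)
  rw [norm_mul, norm_fourier_apply, one_mul]

lemma mulF_mulF (m n : ℤ) (f : L2C) : mulF m (mulF n f) = mulF (m + n) f := by
  refine Lp.ext ?_
  filter_upwards [mulF_coeFn m (mulF n f), mulF_coeFn n f, mulF_coeFn (m + n) f]
    with θ h1 h2 h3
  rw [h1, h2, h3, ← mul_assoc, ← fourier_add]

lemma mulF_zero_apply (f : L2C) : mulF 0 f = f := by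
  refine Lp.ext ?_
  filter_upwards [mulF_coeFn 0 f] with θ h1
  rw [h1, fourier_zero, one_mul]

lemma mulF_neg_mulF (m : ℤ) (f : L2C) : mulF (-m) (mulF m f) = f := by
  rw [mulF_mulF, neg_add_cancel, mulF_zero_apply]

lemma fourierCoeff_congr_ae {f g : 𝕋c → ℂ} (h : f =ᵐ[μc] g) (k : ℤ) :
    fourierCoeff f k = fourierCoeff g k := by
  refine integral_congr_ae ?_
  filter_upwards [h] with θ hθ
  rw [hθ]

lemma fourierCoeff_fourier_mul (g : 𝕋c → ℂ) (m k : ℤ) :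
    fourierCoeff (fun θ => fourier m θ * g θ) k = fourierCoeff g (k - m) := by
  show ∫ θ : 𝕋c, fourier (-k) θ • (fourier m θ * g θ) ∂μc
      = ∫ θ : 𝕋c, fourier (-(k - m)) θ • g θ ∂μc
  congr 1
  funext θ
  rw [smul_eq_mul, smul_eq_mul, ← mul_assoc, ← fourier_add]
  congr 2
  ring

lemma mem_H2D_iff (f : L2C) :
    f ∈ H2D ↔ ∀ n : ℤ, n < 0 → fourierCoeff (f : 𝕋c → ℂ) n = 0 := by
  have h : f ∈ H2D ↔ ∀ n : ℤ, n < 0 → fourierBasis.repr f n = 0 := Iff.rfl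
  rw [h]
  constructor <;> intro h' n hn <;> have := h' n hn <;>
    rwa [fourierBasis_repr] at * <;> exact this

lemma isClosed_H2D : IsClosed (H2D : Set L2C) := by
  have he : (H2D : Set L2C)
      = ⋂ (n : ℤ) (_ : n < 0), {f : L2C | (inner ℂ (fourierBasis n) f : ℂ) = 0} := by
    ext f
    simp only [Set.mem_iInter, Set.mem_setOf_eq, SetLike.mem_coe]
    constructor <;> intro h n hn <;> have := h n hn <;>
      rwa [← fourierBasis.repr_apply_apply]  at * <;> exact this
  rw [he]
  refine isClosed_iInter fun n => isClosed_iInter fun _ => ?_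
  exact isClosed_eq (Continuous.inner continuous_const continuous_id) continuous_const

instance : CompleteSpace H2D := isClosed_H2D.completeSpace_coe

lemma mulF_mem_H2D {m : ℤ} (hm : 0 ≤ m) {f : L2C} (hf : f ∈ H2D) : mulF m f ∈ H2D := by
  rw [mem_H2D_iff] at hf ⊢
  intro n hn
  rw [fourierCoeff_congr_ae (mulF_coeFn m f), fourierCoeff_fourier_mul]
  exact hf _ (by omega)

lemma fourierLp_mem_H2D {n : ℤ} (hn : 0 ≤ n) : (fourierLp 2 n : L2C) ∈ H2D := by
  intro m hm
  have hb : (fourierLp 2 n : L2C) = fourierBasis n := by rw [coe_fourierBasis]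
  rw [hb, fourierBasis.repr_self, lp.single_apply_ne 2 n 1 (by omega : m ≠ n)]
lemma integrable_continuousMap_mul {w : 𝕋c → ℂ} (hw : Integrable w μc) (c : C(𝕋c, ℂ)) :
    Integrable (fun θ => c θ * w θ) μc :=
  hw.bdd_mul (c := ‖c‖) (map_continuous c).aestronglyMeasurable (Filter.Eventually.of_forall fun θ => c.norm_coe_le_norm θ)

lemma integral_continuousMap_mul_eq_zero {w : 𝕋c → ℂ} (hw : Integrable w μc)
    (h : ∀ n : ℤ, fourierCoeff w n = 0) (c : C(𝕋c, ℂ)) :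
    ∫ θ, c θ * w θ ∂μc = 0 := by
  let ℓ : C(𝕋c, ℂ) →L[ℂ] ℂ := LinearMap.mkContinuous
    { toFun := fun c => ∫ θ, c θ * w θ ∂μc
      map_add' := by
        intro c1 c2
        simp only [ContinuousMap.add_apply, add_mul]
        exact integral_add (integrable_continuousMap_mul hw c1)
          (integrable_continuousMap_mul hw c2)
      map_smul' := by
        intro a c
        simp only [ContinuousMap.smul_apply, smul_eq_mul, mul_assoc, RingHom.id_apply]
        exact integral_const_mul a _ }
    (∫ θ, ‖w θ‖ ∂μc) (by
      intro c
      simp only [LinearMap.coe_mk, AddHom.coe_mk]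
      calc ‖∫ θ, c θ * w θ ∂μc‖ ≤ ∫ θ, ‖c θ * w θ‖ ∂μc := norm_integral_le_integral_norm _
      _ ≤ ∫ θ, ‖c‖ * ‖w θ‖ ∂μc := by
          refine integral_mono (integrable_continuousMap_mul hw c).norm (hw.norm.const_mul _)
            fun θ => ?_
          rw [norm_mul]
          exact mul_le_mul_of_nonneg_right (c.norm_coe_le_norm θ) (norm_nonneg _)
      _ = (∫ θ, ‖w θ‖ ∂μc) * ‖c‖ := by rw [integral_const_mul]; ring)
  have hval : ∀ c : C(𝕋c, ℂ), ℓ c = ∫ θ, c θ * w θ ∂μc := fun c => rfl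
  have hgen : ∀ x ∈ Set.range (@fourier (2 * Real.pi)), ℓ x = 0 := by
    rintro x ⟨n, rfl⟩
    rw [hval]
    have : (∫ θ, fourier n θ * w θ ∂μc) = fourierCoeff w (-n) := by
      show _ = ∫ θ : 𝕋c, fourier (-(-n)) θ • w θ ∂μc
      simp only [neg_neg, smul_eq_mul]
    rw [this, h]
  have hspan : ∀ x ∈ Submodule.span ℂ (Set.range (@fourier (2 * Real.pi))), ℓ x = 0 := by
    intro x hx
    induction hx using Submodule.span_induction with
    | mem x hxm => exact hgen x hxm
    | zero => exact map_zero ℓ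
    | add x y _ _ hx hy => rw [map_add, hx, hy, add_zero]
    | smul a x _ hx => rw [ContinuousLinearMap.map_smul, hx, smul_zero]
  have hclosed : closure ((Submodule.span ℂ (Set.range (@fourier (2 * Real.pi)))) : Set C(𝕋c, ℂ))
      ⊆ {x | ℓ x = 0} :=
    closure_minimal (fun x hx => hspan x hx) (isClosed_eq ℓ.continuous continuous_const)
  have htop : closure ((Submodule.span ℂ (Set.range (@fourier (2 * Real.pi)))) : Set C(𝕋c, ℂ))
      = Set.univ := by
    rw [← Submodule.topologicalClosure_coe, span_fourier_closure_eq_top]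
    rfl
  have hc : c ∈ {x | ℓ x = 0} := hclosed (htop ▸ Set.mem_univ c)
  rw [← hval]
  exact hc

lemma ae_zero_of_fourierCoeff_eq_zero {w : 𝕋c → ℂ} (hw : Integrable w μc)
    (h : ∀ n : ℤ, fourierCoeff w n = 0) : w =ᵐ[μc] 0 := by
  have hww' : w =ᵐ[μc] hw.1.mk w := hw.1.ae_eq_mk
  set w' : 𝕋c → ℂ := hw.1.mk w with hw'def
  suffices hs : w' =ᵐ[μc] 0 by exact hww'.trans hs
  have hw'meas : StronglyMeasurable w' := hw.1.stronglyMeasurable_mk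
  have hw'int : Integrable w' μc := hw.congr hww'
  have h' : ∀ n : ℤ, fourierCoeff w' n = 0 := fun n =>
    (fourierCoeff_congr_ae hww'.symm n).trans (h n)
  set ν : Measure 𝕋c := MeasureTheory.Measure.withDensity μc (fun θ => (‖w' θ‖₊ : ENNReal)) with hν
  haveI hfin : IsFiniteMeasure ν := isFiniteMeasure_withDensity hw'int.2.ne
  have hset : ∀ s : Set 𝕋c, MeasurableSet s → ∫ θ in s, w' θ ∂μc = 0 := by
    intro s hs
    set f : 𝕋c → ℂ := s.indicator (fun _ => (1 : ℂ)) with hfdef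
    have hfbd : ∀ θ, ‖f θ‖ ≤ 1 := by
      intro θ
      rw [hfdef]
      by_cases hθ : θ ∈ s <;> simp [Set.indicator_apply, hθ]
    have hfint : Integrable (fun θ => f θ * w' θ) μc :=
      hw'int.bdd_mul (c := 1) (measurable_const.indicator hs).aestronglyMeasurable (Filter.Eventually.of_forall hfbd)
    have h1 : ∫ θ in s, w' θ ∂μc = ∫ θ, f θ * w' θ ∂μc := by
      rw [← integral_indicator hs]
      congr 1
      funext θ
      rw [hfdef]
      by_cases hθ : θ ∈ s <;> simp [Set.indicator_apply, hθ]
    have key : ∀ ε : ℝ, 0 < ε → ‖∫ θ, f θ * w' θ ∂μc‖ ≤ ε := by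
      intro ε hε
      have hfν : Integrable f ν := (integrable_const (1 : ℂ)).indicator hs
      obtain ⟨g, hg, -⟩ := hfν.exists_boundedContinuous_integral_sub_le hε
      have hgw : ∫ θ, (g θ : ℂ) * w' θ ∂μc = 0 :=
        integral_continuousMap_mul_eq_zero hw'int h' g.toContinuousMap
      have hgint : Integrable (fun θ => (g θ : ℂ) * w' θ) μc :=
        hw'int.bdd_mul (c := ‖g‖) g.continuous.aestronglyMeasurable (Filter.Eventually.of_forall fun θ => g.norm_coe_le_norm θ)
      have hsplit : ∫ θ, f θ * w' θ ∂μc = ∫ θ, (f θ - g θ) * w' θ ∂μc := by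
        rw [show (fun θ => (f θ - g θ) * w' θ)
            = fun θ => f θ * w' θ - (g θ : ℂ) * w' θ by funext θ; ring,
          integral_sub hfint hgint, hgw, sub_zero]
      rw [hsplit]
      calc ‖∫ θ, (f θ - g θ) * w' θ ∂μc‖ ≤ ∫ θ, ‖(f θ - g θ) * w' θ‖ ∂μc :=
            norm_integral_le_integral_norm _
        _ = ∫ θ, ‖w' θ‖₊ • ‖f θ - g θ‖ ∂μc := by
            congr 1
            funext θ
            rw [norm_mul, NNReal.smul_def, coe_nnnorm, smul_eq_mul]
            ring
        _ = ∫ θ, ‖f θ - g θ‖ ∂ν := by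
            rw [hν, integral_withDensity_eq_integral_smul hw'meas.measurable.nnnorm]
        _ ≤ ε := hg
    have : ‖∫ θ, f θ * w' θ ∂μc‖ ≤ 0 := by
      by_contra hpos
      push_neg at hpos
      have := key (‖∫ θ, f θ * w' θ ∂μc‖ / 2) (by linarith)
      linarith
    rw [h1]
    simpa using norm_le_zero_iff.mp this
  exact ae_eq_zero_of_forall_setIntegral_eq_of_sigmaFinite
    (fun s _ _ => hw'int.integrableOn) (fun s hs _ => hset s hs)
lemma integral_fourier (m : ℤ) :
    (∫ θ : 𝕋c, fourier m θ ∂μc) = if m = 0 then 1 else 0 := by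
  by_cases hm : m = 0
  · subst hm
    simp only [if_true]
    have : (fun θ : 𝕋c => (fourier 0 θ : ℂ)) = fun _ => (1 : ℂ) := by
      funext θ; rw [fourier_zero]
    rw [this, integral_const]
    simp
  · rw [if_neg hm]
    have horth := orthonormal_iff_ite.mp (@orthonormal_fourier (2 * Real.pi) _) 0 m
    rw [if_neg (fun h => hm h.symm)] at horth
    rw [MeasureTheory.L2.inner_def] at horth
    rw [← horth]
    refine integral_congr_ae ?_
    filter_upwards [coeFn_fourierLp (T := 2 * Real.pi) 2 0, coeFn_fourierLp (T := 2 * Real.pi) 2 m]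
      with θ h0 h1
    rw [RCLike.inner_apply, h0, h1, fourier_zero, map_one, mul_one]

lemma fourierCoeff_const (c : ℂ) (n : ℤ) :
    fourierCoeff (fun _ : 𝕋c => c) n = if n = 0 then c else 0 := by
  have : fourierCoeff (fun _ : 𝕋c => c) n = (∫ θ : 𝕋c, fourier (-n) θ ∂μc) • c := by
    show (∫ θ : 𝕋c, fourier (-n) θ • c ∂μc) = _
    rw [integral_smul_const]
  rw [this, integral_fourier]
  by_cases hn : n = 0
  · subst hn; simp
  · rw [if_neg (by omega : ¬ -n = 0), if_neg hn, zero_smul]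

/-- The F. and M. Riesz type theorem: an `H²` function vanishing on a set of positive
measure is zero. -/
lemma fmRiesz {f : L2C} (hf : f ∈ H2D) {A : Set 𝕋c} (hA : MeasurableSet A)
    (hA0 : μc A ≠ 0) (hvan : ∀ᵐ θ ∂μc, θ ∈ A → (f : 𝕋c → ℂ) θ = 0) : f = 0 := by
  classical
  set base : Submodule ℂ L2C := Submodule.span ℂ (Set.range fun n : ℕ => mulF (n : ℤ) f)
    with hbase
  set S : Submodule ℂ L2C := base.topologicalClosure with hS
  have hfS : f ∈ S := by
    have h0 : f ∈ base := by
      rw [hbase]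
      refine Submodule.subset_span ⟨0, ?_⟩
      simpa using mulF_zero_apply f
    exact base.le_topologicalClosure h0
  have hS_H2D : S ≤ H2D := by
    refine Submodule.topologicalClosure_minimal base ?_ isClosed_H2D
    rw [hbase, Submodule.span_le]
    rintro x ⟨n, rfl⟩
    exact mulF_mem_H2D (by positivity) hf
  -- the vanishing submodule
  set ind : 𝕋c → ℂ := A.indicator (fun _ => (1 : ℂ)) with hind
  have hindm : Measurable ind := measurable_const.indicator hA
  have hindb : ∀ θ, ‖ind θ‖ ≤ 1 := by
    intro θ
    rw [hind]
    by_cases hθ : θ ∈ A <;> simp [Set.indicator_apply, hθ]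
  set VA : Submodule ℂ L2C := LinearMap.ker (mulCLM hindm hindb : L2C →ₗ[ℂ] L2C) with hVA
  have hmem_VA : ∀ g : L2C, g ∈ VA ↔ ∀ᵐ θ ∂μc, θ ∈ A → (g : 𝕋c → ℂ) θ = 0 := by
    intro g
    rw [hVA, LinearMap.mem_ker]
    constructor
    · intro hg
      have h0 : (mulCLM hindm hindb g : 𝕋c → ℂ) =ᵐ[μc] 0 := by
        rw [show mulCLM hindm hindb g = 0 from hg]; exact Lp.coeFn_zero _ _ _
      filter_upwards [mulCLM_coeFn hindm hindb g, h0] with θ h1 h2 hθA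
      rw [h1] at h2
      simpa [hind, Set.indicator_apply, hθA] using h2
    · intro hg
      refine Lp.ext ?_
      filter_upwards [mulCLM_coeFn hindm hindb g, Lp.coeFn_zero ℂ 2 μc, hg] with θ h1 h2 h3
      rw [ContinuousLinearMap.coe_coe, h1, h2, hind]
      by_cases hθ : θ ∈ A
      · simp [Set.indicator_apply, hθ, h3 hθ]
      · simp [Set.indicator_apply, hθ]
  have hS_VA : S ≤ VA := by
    refine Submodule.topologicalClosure_minimal base ?_ ?_
    · rw [hbase, Submodule.span_le]
      rintro x ⟨n, rfl⟩
      rw [SetLike.mem_coe, hmem_VA]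
      filter_upwards [mulF_coeFn (n : ℤ) f, hvan] with θ h1 h2 hθA
      rw [h1, h2 hθA, mul_zero]
    · exact ContinuousLinearMap.isClosed_ker _
  -- S is invariant under the unilateral shift
  have hSc : IsClosed (S : Set L2C) := by
    rw [hS, Submodule.topologicalClosure_coe]
    exact isClosed_closure
  have hinv : ∀ y, y ∈ S → mulF 1 y ∈ S := by
    intro y hy
    have hbinv : (mulF 1) '' (base : Set L2C) ⊆ (base : Set L2C) := by
      rintro x ⟨z, hz, rfl⟩
      have hmap : z ∈ base → mulF 1 z ∈ base := by
        intro hzb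
        have : Submodule.map (mulF 1 : L2C →ₗ[ℂ] L2C) base ≤ base := by
          rw [hbase, Submodule.map_span, Submodule.span_le]
          rintro u ⟨v, ⟨n, rfl⟩, rfl⟩
          refine Submodule.subset_span ⟨n + 1, ?_⟩
          show mulF ((n : ℤ) + 1) f = (mulF 1).toLinearMap (mulF (n : ℤ) f)
          rw [ContinuousLinearMap.coe_coe, mulF_mulF, add_comm]
        exact this ⟨z, hzb, rfl⟩
      exact hmap hz
    have hyc : (y : L2C) ∈ closure (base : Set L2C) := by
      rw [← Submodule.topologicalClosure_coe]
      exact hy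
    have : mulF 1 y ∈ closure ((mulF 1) '' (base : Set L2C)) :=
      image_closure_subset_closure_image (mulF 1).continuous ⟨y, hyc, rfl⟩
    have h2 : mulF 1 y ∈ closure (base : Set L2C) :=
      closure_mono hbinv this
    rw [← Submodule.topologicalClosure_coe] at h2
    exact h2
  have hinv_nat : ∀ (m : ℕ) (y : L2C), y ∈ S → mulF (m : ℤ) y ∈ S := by
    intro m
    induction m with
    | zero =>
      intro y hy
      rw [show ((0 : ℕ) : ℤ) = 0 from rfl, mulF_zero_apply]
      exact hy
    | succ k ih =>
      intro y hy
      have : mulF ((k : ℤ) + 1) y = mulF 1 (mulF (k : ℤ) y) := by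
        rw [mulF_mulF, add_comm]
      rw [show ((k + 1 : ℕ) : ℤ) = (k : ℤ) + 1 by push_cast; ring, this]
      exact hinv _ (ih y hy)
  -- the shifted submodule
  set N : Submodule ℂ L2C := Submodule.map (mulF 1 : L2C →ₗ[ℂ] L2C) S with hN
  have hNS : N ≤ S := by
    rintro x ⟨y, hy, rfl⟩
    exact hinv y hy
  have hiso : Isometry ⇑(mulF 1) := AddMonoidHomClass.isometry_of_norm _ (norm_mulF 1)
  have hNc : IsClosed (N : Set L2C) := by
    have hNcoe : (N : Set L2C) = (mulF 1) '' (S : Set L2C) := by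
      rw [hN]; rfl
    rw [hNcoe]
    exact ((hiso.isUniformInducing.isComplete_iff).mpr (hSc.isComplete)).isClosed
  by_cases hNeq : N = S
  · -- backward shifts of f stay in S, hence all Fourier coefficients vanish
    have hback : ∀ m : ℕ, mulF (-(m : ℤ)) f ∈ S := by
      intro m
      induction m with
      | zero =>
        rw [show (-((0 : ℕ) : ℤ)) = 0 by simp, mulF_zero_apply]
        exact hfS
      | succ k ih =>
        have hmem : mulF (-(k : ℤ)) f ∈ N := by rw [hNeq]; exact ih
        obtain ⟨y, hy, hy2⟩ := hmem
        have : y = mulF (-((k : ℤ) + 1)) f := by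
          have h3 : mulF (-1) (mulF 1 y) = y := mulF_neg_mulF 1 y
          have h4 : (mulF 1).toLinearMap y = mulF 1 y := rfl
          rw [h4] at hy2
          rw [← h3, hy2, mulF_mulF]
          congr 1
          ring
        rw [show (-(↑(k + 1) : ℤ)) = -((k : ℤ) + 1) by push_cast; ring]
        rw [← this]
        exact hy
    have hcoeffs : ∀ k : ℤ, fourierCoeff (f : 𝕋c → ℂ) k = 0 := by
      intro k
      rcases lt_or_ge k 0 with hk | hk
      · exact (mem_H2D_iff f).mp hf k hk
      · set m : ℕ := (k + 1).toNat with hm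
        have hmk : (m : ℤ) = k + 1 := Int.toNat_of_nonneg (by omega)
        have h5 := (mem_H2D_iff _).mp (hS_H2D (hback m)) (k - m) (by omega)
        rw [fourierCoeff_congr_ae (mulF_coeFn (-(m : ℤ)) f), fourierCoeff_fourier_mul] at h5
        have : k - (m : ℤ) - (-(m : ℤ)) = k := by ring
        rwa [this] at h5
    have hrepr : fourierBasis.repr f = 0 := by
      ext k
      rw [fourierBasis_repr, hcoeffs k]
      simp
    exact fourierBasis.repr.map_eq_zero_iff.mp hrepr
  · -- proper invariant subspace: produce a "unimodular" element vanishing on A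
    have hlt : N < S := lt_of_le_of_ne hNS hNeq
    obtain ⟨x, hxS, hxN⟩ := SetLike.exists_of_lt hlt
    haveI : CompleteSpace N := hNc.completeSpace_coe
    set q : L2C := x - (N.orthogonalProjectionOnto x : L2C) with hq
    have hq0 : q ≠ 0 := by
      intro h0
      apply hxN
      have : x = (N.orthogonalProjectionOnto x : L2C) := by
        have := sub_eq_zero.mp h0
        exact this
      rw [this]
      exact (N.orthogonalProjectionOnto x).2
    have hqS : q ∈ S := sub_mem hxS (hNS (N.orthogonalProjectionOnto x).2)
    have hqN : q ∈ Nᗮ := Submodule.sub_starProjection_mem_orthogonal (K := N) x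
    -- the function |q|^2
    set w : 𝕋c → ℂ := fun θ => (starRingEnd ℂ) ((q : 𝕋c → ℂ) θ) * (q : 𝕋c → ℂ) θ with hw
    have hwint : Integrable w μc := by
      have := MeasureTheory.L2.integrable_inner (𝕜 := ℂ) q q
      refine this.congr (Filter.Eventually.of_forall fun θ => ?_)
      simp only [RCLike.inner_apply, hw]
      ring
    have hinner : ∀ n : ℤ, 1 ≤ n → fourierCoeff w n = 0 := by
      intro n hn
      have hmem : mulF n q ∈ N := by
        have h6 : mulF (n - 1) q ∈ S := by
          have := hinv_nat (n - 1).toNat q hqS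
          rwa [Int.toNat_of_nonneg (by omega)] at this
        refine ⟨mulF (n - 1) q, h6, ?_⟩
        show mulF 1 (mulF (n - 1) q) = mulF n q
        rw [mulF_mulF]
        congr 1
        ring
      have horth : (inner ℂ (mulF n q) q : ℂ) = 0 :=
        (Submodule.mem_orthogonal N q).mp hqN _ hmem
      rw [MeasureTheory.L2.inner_def] at horth
      rw [← horth]
      show (∫ θ : 𝕋c, fourier (-n) θ • w θ ∂μc) = _
      refine integral_congr_ae ?_
      filter_upwards [mulF_coeFn n q] with θ h1
      rw [RCLike.inner_apply, h1, hw]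
      simp only [smul_eq_mul, map_mul]
      rw [← fourier_neg]
      ring
    have hconj : ∀ n : ℤ, fourierCoeff w (-n) = (starRingEnd ℂ) (fourierCoeff w n) := by
      intro n
      rw [show fourierCoeff w n = ∫ θ : 𝕋c, fourier (-n) θ • w θ ∂μc from rfl,
        show fourierCoeff w (-n) = ∫ θ : 𝕋c, fourier (-(-n)) θ • w θ ∂μc from rfl]
      rw [← integral_conj]
      refine integral_congr_ae (Filter.Eventually.of_forall fun θ => ?_)
      simp only [smul_eq_mul, map_mul, neg_neg, hw, fourier_neg, Complex.conj_conj]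
      ring
    have hcoeff_ne : ∀ n : ℤ, n ≠ 0 → fourierCoeff w n = 0 := by
      intro n hn
      rcases lt_or_ge n 0 with h | h
      · have : fourierCoeff w n = (starRingEnd ℂ) (fourierCoeff w (-n)) := by
          rw [← hconj (-n), neg_neg]
        rw [this, hinner (-n) (by omega), map_zero]
      · exact hinner n (by omega)
    set cst : ℂ := fourierCoeff w 0 with hcst
    have hcst_ne : cst ≠ 0 := by
      have h7 : cst = (inner ℂ q q : ℂ) := by
        rw [MeasureTheory.L2.inner_def, hcst]
        show (∫ θ : 𝕋c, fourier (-0) θ • w θ ∂μc) = _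
        refine integral_congr_ae (Filter.Eventually.of_forall fun θ => ?_)
        simp only [neg_zero, fourier_zero, one_smul, hw, RCLike.inner_apply]
        ring
      rw [h7]
      exact fun h8 => hq0 (inner_self_eq_zero.mp h8)
    have hw2 : (fun θ => w θ - cst) =ᵐ[μc] 0 := by
      refine ae_zero_of_fourierCoeff_eq_zero (hwint.sub (integrable_const cst)) ?_
      intro n
      have hsub : fourierCoeff (fun θ => w θ - cst) n
          = fourierCoeff w n - fourierCoeff (fun _ : 𝕋c => cst) n := by
        show (∫ θ : 𝕋c, fourier (-n) θ • (w θ - cst) ∂μc) = _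
        have h9 : (fun θ : 𝕋c => fourier (-n) θ • (w θ - cst))
            = fun θ : 𝕋c => fourier (-n) θ • w θ - fourier (-n) θ • cst := by
          funext θ; rw [smul_sub]
        rw [h9]
        refine integral_sub ?_ ?_
        · exact (hwint.bdd_mul (map_continuous (fourier (-n))).aestronglyMeasurable
            (c := 1) (Filter.Eventually.of_forall fun θ => le_of_eq (norm_fourier_apply _ _)))
        · exact ((integrable_const cst).bdd_mul
            (map_continuous (fourier (-n))).aestronglyMeasurable
            (c := 1) (Filter.Eventually.of_forall fun θ => le_of_eq (norm_fourier_apply _ _)))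
      rw [hsub, fourierCoeff_const]
      by_cases hn : n = 0
      · subst hn; simp [hcst]
      · rw [if_neg hn, hcoeff_ne n hn, sub_zero]
    -- q vanishes a.e. on A, but |q|² = cst ≠ 0 a.e.
    have hqA : ∀ᵐ θ ∂μc, θ ∈ A → (q : 𝕋c → ℂ) θ = 0 := (hmem_VA q).mp (hS_VA hqS)
    have hP : ∀ᵐ θ ∂μc, (θ ∈ A → (q : 𝕋c → ℂ) θ = 0) ∧ w θ = cst := by
      filter_upwards [hqA, hw2] with θ h1 h2
      exact ⟨h1, by simpa [sub_eq_zero] using h2⟩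
    have hex : ∃ θ, θ ∈ A ∧ ((θ ∈ A → (q : 𝕋c → ℂ) θ = 0) ∧ w θ = cst) := by
      by_contra hne
      push_neg at hne
      refine hA0 (measure_mono_null (fun θ hθ => ?_) (ae_iff.mp hP))
      exact fun hP' => hne θ hθ hP'.1 hP'.2
    obtain ⟨θ, hθA, hθ1, hθ2⟩ := hex
    exfalso
    apply hcst_ne
    rw [← hθ2]
    simp only [hw]
    rw [hθ1 hθA, mul_zero]
lemma coburn (φ : 𝕋c → ℂ) (hφ : MemLp φ ⊤ μc) (T : H2D →L[ℂ] H2D) (hT : IsToeplitzD φ T)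
    (f₀ : H2D) (hTf₀ : T f₀ = 0) (hf₀0 : f₀ ≠ 0)
    (g₀ : H2D) (hg₀ : ∀ f : H2D, (inner ℂ ((T f : L2C)) ((g₀ : L2C)) : ℂ) = 0) (hg₀0 : g₀ ≠ 0) :
    ∀ f : H2D, T f = 0 := by
  classical
  set F : L2C := (f₀ : L2C) with hF
  set G : L2C := (g₀ : L2C) with hG
  set w : 𝕋c → ℂ := fun θ => φ θ * (F : 𝕋c → ℂ) θ * (starRingEnd ℂ) ((G : 𝕋c → ℂ) θ) with hw
  have hFG : Integrable (fun θ => (F : 𝕋c → ℂ) θ * (starRingEnd ℂ) ((G : 𝕋c → ℂ) θ)) μc := by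
    have h0 := MeasureTheory.L2.integrable_inner (𝕜 := ℂ) G F
    refine h0.congr (Filter.Eventually.of_forall fun θ => ?_)
    simp only [RCLike.inner_apply]
  have hwint : Integrable w μc := by
    have h2 := hFG.smul_of_top_right hφ
    refine h2.congr (Filter.Eventually.of_forall fun θ => ?_)
    simp only [Pi.smul_apply, Pi.mul_apply, smul_eq_mul, hw]
    ring
  have hK1 : ∀ g : H2D, (∫ θ, (starRingEnd ℂ) (φ θ * (F : 𝕋c → ℂ) θ)
      * ((g : L2C) : 𝕋c → ℂ) θ ∂μc) = 0 := by
    intro g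
    rw [← hT f₀ g]
    have h3 : ((T f₀ : L2C)) = 0 := by rw [hTf₀]; rfl
    rw [h3, inner_zero_left]
  have hK2 : ∀ f : H2D, (∫ θ, (starRingEnd ℂ) (φ θ * ((f : L2C) : 𝕋c → ℂ) θ)
      * ((G : 𝕋c → ℂ)) θ ∂μc) = 0 := by
    intro f
    rw [← hT f g₀]
    exact hg₀ f
  have hcoeff : ∀ n : ℤ, fourierCoeff w n = 0 := by
    intro n
    rcases le_or_gt 0 n with hn | hn
    · set gel : H2D := ⟨mulF n G, mulF_mem_H2D hn (SetLike.coe_mem g₀)⟩ with hgel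
      have h1 := hK1 gel
      have h2 : (∫ θ, (starRingEnd ℂ) (φ θ * (F : 𝕋c → ℂ) θ)
          * (fourier n θ * (G : 𝕋c → ℂ) θ) ∂μc) = 0 := by
        rw [← h1]
        refine integral_congr_ae ?_
        filter_upwards [mulF_coeFn n G] with θ hθ
        have : ((gel : L2C) : 𝕋c → ℂ) θ = (mulF n G : 𝕋c → ℂ) θ := rfl
        rw [this, hθ]
      have h4 : fourierCoeff w n = (starRingEnd ℂ) (∫ θ, (starRingEnd ℂ)
          (φ θ * (F : 𝕋c → ℂ) θ) * (fourier n θ * (G : 𝕋c → ℂ) θ) ∂μc) := by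
        rw [← integral_conj]
        show (∫ θ : 𝕋c, fourier (-n) θ • w θ ∂μc) = _
        refine integral_congr_ae (Filter.Eventually.of_forall fun θ => ?_)
        simp only [smul_eq_mul, map_mul, Complex.conj_conj, fourier_neg, hw]
        ring
      rw [h4, h2, map_zero]
    · set fel : H2D := ⟨mulF (-n) F, mulF_mem_H2D (by omega) (SetLike.coe_mem f₀)⟩ with hfel
      have h1 := hK2 fel
      have h2 : (∫ θ, (starRingEnd ℂ) (φ θ * (fourier (-n) θ * (F : 𝕋c → ℂ) θ))
          * ((G : 𝕋c → ℂ)) θ ∂μc) = 0 := by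
        rw [← h1]
        refine integral_congr_ae ?_
        filter_upwards [mulF_coeFn (-n) F] with θ hθ
        have : ((fel : L2C) : 𝕋c → ℂ) θ = (mulF (-n) F : 𝕋c → ℂ) θ := rfl
        rw [this, hθ]
      have h4 : fourierCoeff w n = (starRingEnd ℂ) (∫ θ, (starRingEnd ℂ)
          (φ θ * (fourier (-n) θ * (F : 𝕋c → ℂ) θ)) * ((G : 𝕋c → ℂ)) θ ∂μc) := by
        rw [← integral_conj]
        show (∫ θ : 𝕋c, fourier (-n) θ • w θ ∂μc) = _
        refine integral_congr_ae (Filter.Eventually.of_forall fun θ => ?_)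
        simp only [smul_eq_mul, map_mul, Complex.conj_conj, fourier_neg, hw]
        ring
      rw [h4, h2, map_zero]
  have hw0 : w =ᵐ[μc] 0 := ae_zero_of_fourierCoeff_eq_zero hwint hcoeff
  -- zero sets
  have hmF : MeasurableSet {θ : 𝕋c | (F : 𝕋c → ℂ) θ = 0} := by
    have := (Lp.stronglyMeasurable F).measurable (MeasurableSet.singleton (0 : ℂ))
    exact this
  have hmG : MeasurableSet {θ : 𝕋c | (G : 𝕋c → ℂ) θ = 0} := by
    have := (Lp.stronglyMeasurable G).measurable (MeasurableSet.singleton (0 : ℂ))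
    exact this
  by_cases hFz : μc {θ : 𝕋c | (F : 𝕋c → ℂ) θ = 0} = 0
  · by_cases hGz : μc {θ : 𝕋c | (G : 𝕋c → ℂ) θ = 0} = 0
    · have hF_ne : ∀ᵐ θ ∂μc, (F : 𝕋c → ℂ) θ ≠ 0 := by
        refine ae_iff.mpr ?_
        simpa only [not_not] using hFz
      have hG_ne : ∀ᵐ θ ∂μc, (G : 𝕋c → ℂ) θ ≠ 0 := by
        refine ae_iff.mpr ?_
        simpa only [not_not] using hGz
      have hφ0 : φ =ᵐ[μc] 0 := by
        filter_upwards [hw0, hF_ne, hG_ne] with θ h1 h2 h3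
        simp only [hw, Pi.zero_apply] at h1 ⊢
        rcases mul_eq_zero.mp h1 with h4 | h4
        · rcases mul_eq_zero.mp h4 with h5 | h5
          · exact h5
          · exact absurd h5 h2
        · exact absurd ((map_eq_zero _).mp h4) h3
      intro f
      have hTf : ∀ g : H2D, (inner ℂ ((T f : L2C)) ((g : L2C)) : ℂ) = 0 := by
        intro g
        rw [hT f g]
        refine integral_eq_zero_of_ae ?_
        filter_upwards [hφ0] with θ h1
        simp only [Pi.zero_apply] at h1
        simp [h1]
      have h2 := hTf (T f)
      exact ZeroMemClass.coe_eq_zero.mp (inner_self_eq_zero.mp h2)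
    · exfalso
      have hG0 : G = 0 := by
        refine fmRiesz (SetLike.coe_mem g₀) hmG hGz ?_
        exact Filter.Eventually.of_forall fun θ h => h
      exact hg₀0 (ZeroMemClass.coe_eq_zero.mp (by rw [← hG]; exact hG0))
  · exfalso
    have hF0 : F = 0 := by
      refine fmRiesz (SetLike.coe_mem f₀) hmF hFz ?_
      exact Filter.Eventually.of_forall fun θ h => h
    exact hf₀0 (ZeroMemClass.coe_eq_zero.mp (by rw [← hF]; exact hF0))
end ToeplitzAux

open ToeplitzAux in
/-- A Toeplitz operator `T_φ` on `H²(𝔻)` with symbol `φ ∈ L^∞(𝕋)` is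
invertible iff it is Fredholm of index zero. -/
theorem toeplitz_invertible_iff_fredholm_index_zero
    (φ : 𝕋c → ℂ) (hφ : MemLp φ ⊤ haarAddCircle)
    (T : H2D →L[ℂ] H2D) (hT : IsToeplitzD φ T) :
    IsUnit T ↔ (IsFredholm T ∧ fredholmIndex T = 0) := by
  classical
  constructor
  · rintro ⟨u, hu⟩
    have hinj : Function.Injective ⇑T := by
      intro x y hxy
      have h1 : (↑u⁻¹ * ↑u : H2D →L[ℂ] H2D) x = (↑u⁻¹ * ↑u : H2D →L[ℂ] H2D) y := by
        rw [ContinuousLinearMap.mul_apply, ContinuousLinearMap.mul_apply, hu, hxy]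
      rw [u.inv_mul] at h1
      simpa using h1
    have hsurj : Function.Surjective ⇑T := by
      intro y
      refine ⟨(↑u⁻¹ : H2D →L[ℂ] H2D) y, ?_⟩
      have h1 : (↑u * ↑u⁻¹ : H2D →L[ℂ] H2D) y = y := by rw [u.mul_inv]; simp
      rw [← hu]
      rw [ContinuousLinearMap.mul_apply] at h1
      exact h1
    have hker : LinearMap.ker (T : H2D →ₗ[ℂ] H2D) = ⊥ := LinearMap.ker_eq_bot.mpr hinj
    have hrange : LinearMap.range (T : H2D →ₗ[ℂ] H2D) = ⊤ := LinearMap.range_eq_top.mpr hsurj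
    haveI hsub : Subsingleton (↥H2D ⧸ LinearMap.range (T : H2D →ₗ[ℂ] H2D)) :=
      Submodule.Quotient.subsingleton_iff.mpr hrange
    refine ⟨⟨?_, ?_, ?_⟩, ?_⟩
    · rw [hker]; infer_instance
    · infer_instance
    · rw [Set.range_eq_univ.mpr hsurj]; exact isClosed_univ
    · rw [fredholmIndex, hker, finrank_bot, Module.finrank_zero_of_subsingleton]
      simp
  · rintro ⟨⟨hfk, hfc, hcl⟩, hidx⟩
    have heq : Module.finrank ℂ (LinearMap.ker (T : H2D →ₗ[ℂ] H2D))
        = Module.finrank ℂ (↥H2D ⧸ LinearMap.range (T : H2D →ₗ[ℂ] H2D)) := by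
      rw [fredholmIndex, sub_eq_zero] at hidx
      exact_mod_cast hidx
    by_cases hk0 : Module.finrank ℂ (LinearMap.ker (T : H2D →ₗ[ℂ] H2D)) = 0
    · -- bijective, hence invertible
      have hker : LinearMap.ker (T : H2D →ₗ[ℂ] H2D) = ⊥ := Submodule.finrank_eq_zero.mp hk0
      have hc0 : Module.finrank ℂ (↥H2D ⧸ LinearMap.range (T : H2D →ₗ[ℂ] H2D)) = 0 := by omega
      haveI hsub : Subsingleton (↥H2D ⧸ LinearMap.range (T : H2D →ₗ[ℂ] H2D)) :=
        Module.finrank_zero_iff.mp hc0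
      have hrange : LinearMap.range (T : H2D →ₗ[ℂ] H2D) = ⊤ :=
        Submodule.Quotient.subsingleton_iff.mp hsub
      set e := ContinuousLinearEquiv.ofBijective T hker hrange with he
      refine ⟨⟨T, (e.symm : H2D →L[ℂ] H2D), ?_, ?_⟩, rfl⟩
      · refine ContinuousLinearMap.ext fun x => ?_
        simp only [ContinuousLinearMap.mul_apply, ContinuousLinearMap.one_apply,
          ContinuousLinearEquiv.coe_coe]
        exact ContinuousLinearEquiv.ofBijective_apply_symm_apply T hker hrange x
      · refine ContinuousLinearMap.ext fun x => ?_
        simp only [ContinuousLinearMap.mul_apply, ContinuousLinearMap.one_apply,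
          ContinuousLinearEquiv.coe_coe]
        exact ContinuousLinearEquiv.ofBijective_symm_apply_apply T hker hrange x
    · -- both kernel and cokernel nontrivial: contradiction via Coburn's lemma
      exfalso
      have hkerne : LinearMap.ker (T : H2D →ₗ[ℂ] H2D) ≠ ⊥ := by
        intro hbot
        rw [hbot, finrank_bot] at hk0
        exact hk0 rfl
      obtain ⟨f₀v, hf₀mem, hf₀ne⟩ := Submodule.exists_mem_ne_zero_of_ne_bot hkerne
      have hrne : LinearMap.range (T : H2D →ₗ[ℂ] H2D) ≠ ⊤ := by
        intro htop
        haveI : Subsingleton (↥H2D ⧸ LinearMap.range (T : H2D →ₗ[ℂ] H2D)) :=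
          Submodule.Quotient.subsingleton_iff.mpr htop
        have h6 : Module.finrank ℂ (↥H2D ⧸ LinearMap.range (T : H2D →ₗ[ℂ] H2D)) = 0 :=
          Module.finrank_zero_of_subsingleton
        rw [h6] at heq
        exact hk0 heq
      have hclosedsub : IsClosed ((LinearMap.range (T : H2D →ₗ[ℂ] H2D) : Submodule ℂ H2D) : Set H2D) := by
        have h5 : ((LinearMap.range (T : H2D →ₗ[ℂ] H2D) : Submodule ℂ H2D) : Set H2D) = Set.range ⇑T := by
          ext y
          simp [LinearMap.mem_range, Set.mem_range]
        rw [h5]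
        exact hcl
      haveI : CompleteSpace ↥(LinearMap.range (T : H2D →ₗ[ℂ] H2D)) := hclosedsub.completeSpace_coe
      have horth : (LinearMap.range (T : H2D →ₗ[ℂ] H2D))ᗮ ≠ ⊥ := by
        intro hb
        exact hrne (Submodule.orthogonal_eq_bot_iff.mp hb)
      obtain ⟨g₀v, hg₀mem, hg₀ne⟩ := Submodule.exists_mem_ne_zero_of_ne_bot horth
      have hTf₀ : T f₀v = 0 := LinearMap.mem_ker.mp hf₀mem
      have hg₀ : ∀ f : H2D, (inner ℂ ((T f : L2C)) ((g₀v : L2C)) : ℂ) = 0 := by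
        intro f
        have h6 : (inner ℂ (T f) g₀v : ℂ) = 0 :=
          (Submodule.mem_orthogonal _ g₀v).mp hg₀mem (T f) (LinearMap.mem_range_self (T : H2D →ₗ[ℂ] H2D) f)
        rw [← Submodule.coe_inner]
        exact h6
      have hT0 := coburn φ hφ T hT f₀v hTf₀ hf₀ne g₀v hg₀ hg₀ne
      have hker_top : LinearMap.ker (T : H2D →ₗ[ℂ] H2D) = ⊤ := by
        rw [eq_top_iff]
        intro x _
        exact LinearMap.mem_ker.mpr (hT0 x)
      haveI h7 : FiniteDimensional ℂ ↥(⊤ : Submodule ℂ H2D) := hker_top ▸ hfk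
      haveI h8 : FiniteDimensional ℂ H2D := Module.Finite.equiv (Submodule.topEquiv)
      set v : ℕ → H2D := fun n => ⟨fourierLp 2 (n : ℤ),
        fourierLp_mem_H2D (Int.natCast_nonneg n)⟩ with hv
      have hvon : Orthonormal ℂ v := by
        rw [orthonormal_iff_ite]
        intro i j
        have h9 : (inner ℂ (v i) (v j) : ℂ) = if (i : ℤ) = (j : ℤ) then 1 else 0 := by
          rw [Submodule.coe_inner]
          exact orthonormal_iff_ite.mp orthonormal_fourier (i : ℤ) (j : ℤ)
        rw [h9]
        by_cases h : i = j
        · simp [h]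
        · rw [if_neg (by exact_mod_cast h), if_neg h]
      exact Module.Finite.not_linearIndependent_of_infinite v hvon.linearIndependent
end
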